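/- Consider the non-autonomous system on the two-sided shift space Σ_2 = {0,1}^ℤ given by the sequence f_{1,∞} = {σ, σ^{-1}, σ^2, σ^{-2}, σ^3, σ^{-3}, …}, where σ is the shift homeomorphism. Then every point of Σ_2 is periodic for this system, the system is topologically transitive and sensitive, but it is not topologically mixing. -/

import Mathlib

open Metric TopologicalSpace MeasureTheory

private lemma key_shift (M : ℕ) :
    HasSum (fun n : ℕ => ((1:ℝ)/2) ^ (n + (M+1))) ((1/2) ^ M) := by
  have h2 : HasSum (fun n : ℕ => ((1:ℝ)/2)^(M+1) * (1/2)^n)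
      (((1:ℝ)/2)^(M+1) * (1 - 1/2)⁻¹) :=
    (hasSum_geometric_of_lt_one (by norm_num) (by norm_num)).mul_left _
  convert h2 using 1
  · funext n; rw [pow_add]; ring
  · rw [pow_succ]; ring

private lemma summable_halfpow : Summable (fun j : ℤ => ((1:ℝ)/2) ^ j.natAbs) := by
  apply Summable.of_nat_of_neg
  · simpa using (hasSum_geometric_of_lt_one (by norm_num : (0:ℝ) ≤ 1/2) (by norm_num)).summable
  · simpa using (hasSum_geometric_of_lt_one (by norm_num : (0:ℝ) ≤ 1/2) (by norm_num)).summable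

private lemma hasSum_tail (N : ℕ) :
    HasSum (fun j : ℤ => if N < j.natAbs then ((1:ℝ)/2) ^ j.natAbs else 0)
      (2 * (1/2) ^ N) := by
  have hf : HasSum (fun n : ℕ => if N < n then ((1:ℝ)/2)^n else 0) ((1/2)^N) := by
    have h3 := key_shift N
    rw [← Function.Injective.hasSum_iff (f := fun n : ℕ => if N < n then ((1:ℝ)/2)^n else 0)
      (g := fun n : ℕ => n + (N+1)) (add_left_injective (N+1)) ?_]
    · convert h3 using 1; funext n; simp only [Function.comp_apply]
      rw [if_pos (by omega)]
    · intro m hm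
      simp only [Set.mem_range] at hm
      show (if N < m then ((1:ℝ)/2)^m else 0) = 0
      rw [if_neg]
      intro h
      exact hm ⟨m - (N+1), by omega⟩
  have hg : HasSum (fun n : ℕ => if N < n + 1 then ((1:ℝ)/2)^(n+1) else 0) ((1/2)^N) := by
    rcases N with _ | M
    · simpa using key_shift 0
    · have h3 := key_shift (M+1)
      rw [← Function.Injective.hasSum_iff
        (f := fun n : ℕ => if M+1 < n + 1 then ((1:ℝ)/2)^(n+1) else 0)
        (g := fun n : ℕ => n + (M+1)) (add_left_injective (M+1)) ?_]
      · convert h3 using 1; funext n; simp only [Function.comp_apply]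
        rw [if_pos (by omega)]
        ring_nf
      · intro m hm
        simp only [Set.mem_range] at hm
        show (if M+1 < m + 1 then ((1:ℝ)/2)^(m+1) else 0) = 0
        rw [if_neg]
        intro h
        exact hm ⟨m - (M+1), by omega⟩
  have h := hf.int_rec hg
  convert h using 1
  · funext j
    cases j with
    | ofNat n => simp
    | negSucc n => simp [Int.natAbs_negSucc]
  · ring

private lemma g_nonneg (x y : ℤ → Bool) (j : ℤ) :
    0 ≤ (if x j = y j then (0:ℝ) else 1) / 2 ^ j.natAbs := by
  split
  · simp
  · positivity

private lemma g_le (x y : ℤ → Bool) (j : ℤ) :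
    (if x j = y j then (0:ℝ) else 1) / 2 ^ j.natAbs ≤ ((1:ℝ)/2) ^ j.natAbs := by
  rw [div_pow, one_pow]
  split
  · rw [zero_div]
    positivity
  · exact le_rfl

private lemma summable_g (x y : ℤ → Bool) :
    Summable (fun j : ℤ => (if x j = y j then (0:ℝ) else 1) / 2 ^ j.natAbs) :=
  Summable.of_nonneg_of_le (g_nonneg x y) (g_le x y) summable_halfpow

private lemma dist_le_of_agree [MetricSpace (ℤ → Bool)]
    (hd : ∀ x y : ℤ → Bool,
      dist x y = ∑' j : ℤ, (if x j = y j then (0 : ℝ) else 1) / 2 ^ j.natAbs)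
    (N : ℕ) (x y : ℤ → Bool) (h : ∀ j : ℤ, j.natAbs ≤ N → x j = y j) :
    dist x y ≤ 2 * (1/2 : ℝ)^N := by
  rw [hd]
  have hts := Summable.tsum_le_tsum
    (f := fun j : ℤ => (if x j = y j then (0:ℝ) else 1) / 2 ^ j.natAbs)
    (g := fun j : ℤ => if N < j.natAbs then ((1:ℝ)/2)^j.natAbs else 0)
    ?_ (summable_g x y) (hasSum_tail N).summable
  · refine hts.trans_eq ?_
    rw [(hasSum_tail N).tsum_eq]
  · intro j
    show (if x j = y j then (0:ℝ) else 1) / 2 ^ j.natAbs ≤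
      if N < j.natAbs then ((1:ℝ)/2)^j.natAbs else 0
    by_cases hj : N < j.natAbs
    · rw [if_pos hj]; exact g_le x y j
    · rw [if_neg hj, h j (by omega), if_pos rfl]
      simp

private lemma le_dist [MetricSpace (ℤ → Bool)]
    (hd : ∀ x y : ℤ → Bool,
      dist x y = ∑' j : ℤ, (if x j = y j then (0 : ℝ) else 1) / 2 ^ j.natAbs)
    (x y : ℤ → Bool) (j0 : ℤ) (h : x j0 ≠ y j0) :
    ((1:ℝ)/2)^j0.natAbs ≤ dist x y := by
  rw [hd]
  have hle := Summable.le_tsum (summable_g x y) j0 (fun j _ => g_nonneg x y j)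
  rw [if_neg h] at hle
  calc ((1:ℝ)/2)^j0.natAbs = 1/2^j0.natAbs := by rw [div_pow, one_pow]
    _ ≤ _ := hle

private lemma cylinder_isOpen (x : ℤ → Bool) (N : ℕ) :
    IsOpen {w : ℤ → Bool | ∀ j : ℤ, j.natAbs ≤ N → w j = x j} := by
  have he : {w : ℤ → Bool | ∀ j : ℤ, j.natAbs ≤ N → w j = x j}
      = ⋂ j ∈ {j : ℤ | j.natAbs ≤ N}, {w : ℤ → Bool | w j = x j} := by
    ext w
    simp [Set.mem_iInter]
  rw [he]
  apply Set.Finite.isOpen_biInter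
  · apply Set.Finite.subset (Set.finite_Icc (-(N:ℤ)) N)
    intro j hj
    simp only [Set.mem_setOf_eq] at hj
    simp only [Set.mem_Icc]
    omega
  · intro j _
    exact (continuous_apply (A := fun _ : ℤ => Bool) j).isOpen_preimage ({x j} : Set Bool) (isOpen_discrete _)

private lemma cylinder_subset {U : Set (ℤ → Bool)} (hU : IsOpen U) {x : ℤ → Bool}
    (hx : x ∈ U) :
    ∃ N : ℕ, {w : ℤ → Bool | ∀ j : ℤ, j.natAbs ≤ N → w j = x j} ⊆ U := by
  obtain ⟨I, u, h1, h2⟩ := isOpen_pi_iff.mp hU x hx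
  refine ⟨I.sup (fun j => j.natAbs), fun w hw => h2 ?_⟩
  rw [Set.mem_pi]
  intro j hj
  have hwj := hw j (Finset.le_sup (f := fun j : ℤ => j.natAbs) hj)
  rw [hwj]
  exact (h1 j hj).2


/-- `nIter f n = f_n ∘ ⋯ ∘ f_1` (with `f (i)` playing the role of `f_{i+1}`), `nIter f 0 = id`. -/
def nIter {X : Type*} (f : ℕ → X → X) : ℕ → X → X
  | 0 => id
  | n + 1 => f n ∘ nIter f n

/-- Strong specification property for a non-autonomous system. -/
def SSP {X : Type*} [MetricSpace X] (f : ℕ → X → X) : Prop :=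
  ∀ ε : ℝ, ε > 0 → ∃ M : ℕ, ∀ k : ℕ, 1 ≤ k → ∀ (x : ℕ → X) (a b : ℕ → ℕ),
    (∀ i, i < k → a i ≤ b i) →
    (∀ i, i + 1 < k → b i < a (i + 1) ∧ M < a (i + 1) - b i) →
    ∀ p : ℕ, M + b (k - 1) - a 0 < p →
      ∃ z : X, (∀ m : ℕ, nIter f (p * m) z = z) ∧
        ∀ i, i < k → ∀ j, a i ≤ j → j ≤ b i →
          dist (nIter f j z) (nIter f j (x i)) < ε

/-- Weak specification property for a non-autonomous system. -/
def WSP {X : Type*} [MetricSpace X] (f : ℕ → X → X) : Prop :=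
  ∀ ε : ℝ, ε > 0 → ∃ N : ℕ, ∀ s : ℕ, 1 ≤ s → ∀ (x : ℕ → X) (a b : ℕ → ℕ),
    (∀ i, i < s → a i ≤ b i) →
    (∀ i, i + 1 < s → b i < a (i + 1) ∧ N < a (i + 1) - b i) →
      ∃ z : X, ∀ i, i < s → ∀ j, a i ≤ j → j ≤ b i →
        dist (nIter f j z) (nIter f j (x i)) < ε

/-- Quasi-weak specification property for a non-autonomous system. -/
def QSP {X : Type*} [MetricSpace X] (f : ℕ → X → X) : Prop :=
  ∀ ε : ℝ, ε > 0 → ∃ M : ℕ, ∀ x₁ x₂ : X, ∀ n : ℕ, M ≤ n →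
    ∃ z : X, dist z x₁ < ε ∧ dist (nIter f n z) (nIter f n x₂) < ε

/-- Topological mixing for a non-autonomous system. -/
def TopMixing {X : Type*} [TopologicalSpace X] (f : ℕ → X → X) : Prop :=
  ∀ U V : Set X, IsOpen U → IsOpen V → U.Nonempty → V.Nonempty →
    ∃ N : ℕ, ∀ n : ℕ, N ≤ n → (nIter f n '' U ∩ V).Nonempty

/-- Topological transitivity for a non-autonomous system. -/
def TopTransitive {X : Type*} [TopologicalSpace X] (f : ℕ → X → X) : Prop :=
  ∀ U V : Set X, IsOpen U → IsOpen V → U.Nonempty → V.Nonempty →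
    ∃ n : ℕ, 1 ≤ n ∧ (nIter f n '' U ∩ V).Nonempty

/-- Sensitive dependence on initial conditions for a non-autonomous system. -/
def Sensitive {X : Type*} [MetricSpace X] (f : ℕ → X → X) : Prop :=
  ∃ δ : ℝ, δ > 0 ∧ ∀ x : X, ∀ U : Set X, IsOpen U → x ∈ U →
    ∃ y ∈ U, ∃ n : ℕ, 1 ≤ n ∧ δ < dist (nIter f n x) (nIter f n y)

theorem stmt14 [inst : MetricSpace (ℤ → Bool)]
    (hd : ∀ x y : ℤ → Bool,
      dist x y = ∑' j : ℤ, (if x j = y j then (0 : ℝ) else 1) / 2 ^ j.natAbs)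
    (F : ℕ → (ℤ → Bool) → (ℤ → Bool))
    (hF0 : ∀ k : ℕ, ∀ x : ℤ → Bool, ∀ j : ℤ, F (2 * k) x j = x (j + (k + 1)))
    (hF1 : ∀ k : ℕ, ∀ x : ℤ → Bool, ∀ j : ℤ, F (2 * k + 1) x j = x (j - (k + 1))) :
    (∀ x : ℤ → Bool, ∀ m : ℕ, nIter F (2 * m) x = x) ∧
    TopTransitive F ∧ Sensitive F ∧ ¬ TopMixing F := by
  have nIter_even : ∀ m : ℕ, ∀ x : ℤ → Bool, nIter F (2 * m) x = x := by
    intro m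
    induction m with
    | zero => intro x; rfl
    | succ m ih =>
      intro x
      have h1 : 2 * (m+1) = (2*m+1)+1 := by ring
      rw [h1]
      have h2 : nIter F ((2*m+1)+1) x = F (2*m+1) (F (2*m) (nIter F (2*m) x)) := rfl
      rw [h2, ih x]
      funext j
      rw [hF1 m _ j, hF0 m x (j - (m+1))]
      congr 1
      ring
  have nIter_odd : ∀ m : ℕ, ∀ x : ℤ → Bool, ∀ j : ℤ,
      nIter F (2 * m + 1) x j = x (j + (m + 1)) := by
    intro m x j
    have h2 : nIter F (2*m+1) x = F (2*m) (nIter F (2*m) x) := rfl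
    rw [h2, nIter_even m x, hF0 m x j]
  have exN : ∀ ε : ℝ, 0 < ε → ∃ N : ℕ, 2 * ((1:ℝ)/2)^N < ε := by
    intro ε hε
    obtain ⟨N, hN⟩ := exists_pow_lt_of_lt_one (show (0:ℝ) < ε/2 by linarith)
      (by norm_num : (1:ℝ)/2 < 1)
    exact ⟨N, by linarith⟩
  refine ⟨fun x m => nIter_even m x, ?_, ?_, ?_⟩
  · -- transitivity
    rintro U V hU hV ⟨x, hx⟩ ⟨y, hy⟩
    obtain ⟨N₁, hsub₁⟩ := cylinder_subset hU hx
    obtain ⟨N₂, hsub₂⟩ := cylinder_subset hV hy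
    set N : ℕ := max N₁ N₂ with hNd
    set m : ℕ := 2*N+1 with hm
    set z : ℤ → Bool := fun j => if j.natAbs ≤ N then x j else y (j - ((m:ℤ)+1)) with hz
    have hzU : z ∈ U := by
      apply hsub₁
      intro j hj
      simp only [hz]
      rw [if_pos (by omega)]
    have hwV : nIter F (2*m+1) z ∈ V := by
      apply hsub₂
      intro j hj
      rw [nIter_odd m z j]
      simp only [hz]
      rw [if_neg (by omega)]
      congr 1
      ring
    exact ⟨2*m+1, by omega, nIter F (2*m+1) z, ⟨z, hzU, rfl⟩, hwV⟩
  · -- sensitivity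
    refine ⟨1/2, by norm_num, ?_⟩
    intro x U hU hx
    obtain ⟨ε, hε, hball⟩ := Metric.isOpen_iff.mp hU x hx
    obtain ⟨N, hN⟩ := exN ε hε
    set y : ℤ → Bool := fun j => if j = (N:ℤ)+1 then !(x j) else x j with hy
    have hyU : y ∈ U := by
      apply hball
      rw [Metric.mem_ball]
      have hdle : dist y x ≤ 2 * (1/2:ℝ)^N := by
        apply dist_le_of_agree hd
        intro j hj
        simp only [hy]
        rw [if_neg (by omega)]
      linarith
    refine ⟨y, hyU, 2*N+1, by omega, ?_⟩
    have hne : nIter F (2*N+1) x 0 ≠ nIter F (2*N+1) y 0 := by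
      rw [nIter_odd N x 0, nIter_odd N y 0, zero_add]
      simp only [hy]
      simp
    have hged := le_dist hd _ _ 0 hne
    simp only [Int.natAbs_zero, pow_zero] at hged
    linarith
  · -- not mixing
    intro hmix
    have hopen : ∀ b : Bool, IsOpen {w : ℤ → Bool | w 0 = b} := by
      intro b
      exact (continuous_apply (A := fun _ : ℤ => Bool) (0:ℤ)).isOpen_preimage ({b} : Set Bool) (isOpen_discrete _)
    obtain ⟨N, hN⟩ := hmix {w : ℤ → Bool | w 0 = false} {w : ℤ → Bool | w 0 = true}
      (hopen false) (hopen true) ⟨fun _ => false, rfl⟩ ⟨fun _ => true, rfl⟩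
    obtain ⟨w, ⟨z, hz, hwz⟩, hw⟩ := hN (2*N) (by omega)
    rw [nIter_even N z] at hwz
    subst hwz
    rw [Set.mem_setOf_eq] at hz hw
    rw [hz] at hw
    exact Bool.false_ne_true hw
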